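/- The set {x ∈ ℂ^d : t(x x†) = tr(x x†)} of terminating vectors is a linear subspace of ℂ^d: it contains 0 and is closed under addition and under multiplication by complex scalars. (Here x x† denotes the rank-one positive semidefinite matrix associated with the column vector x.) -/

import Mathlib

noncomputable section
open Matrix
open scoped ComplexOrder

variable {d m r : ℕ}

/-- One step of process `i`: `T_i(ρ) = E_i(M₁ ρ M₁†) = ∑_j (E_{i,j} M₁) ρ (E_{i,j} M₁)†`. -/
def Tstep (E : Fin m → Fin r → Matrix (Fin d) (Fin d) ℂ)
    (M1 : Matrix (Fin d) (Fin d) ℂ) (i : Fin m)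
    (ρ : Matrix (Fin d) (Fin d) ℂ) : Matrix (Fin d) (Fin d) ℂ :=
  ∑ j, (E i j * M1) * ρ * (E i j * M1)ᴴ

/-- `T_f` for a word `f = s₁⋯s_n`: apply `T_{s₁}` first, then `T_{s₂}`, …, `T_{s_n}`. -/
def Tword (E : Fin m → Fin r → Matrix (Fin d) (Fin d) ℂ)
    (M1 : Matrix (Fin d) (Fin d) ℂ) (f : List (Fin m))
    (ρ : Matrix (Fin d) (Fin d) ℂ) : Matrix (Fin d) (Fin d) ℂ :=
  f.foldl (fun σ k => Tstep E M1 k σ) ρ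

/-- The support of a matrix: its column space, as a subspace of `ℂ^d`. -/
def supp (A : Matrix (Fin d) (Fin d) ℂ) : Submodule ℂ (Fin d → ℂ) :=
  LinearMap.range (Matrix.toLin' A)

/-- Length-`n` prefix of a schedule. -/
def prefixn (s : ℕ → Fin m) (n : ℕ) : List (Fin m) :=
  List.ofFn (fun i : Fin n => s i)

/-- Termination probability within a word `f`. -/
def tWord (E : Fin m → Fin r → Matrix (Fin d) (Fin d) ℂ)
    (M0 M1 : Matrix (Fin d) (Fin d) ℂ) (f : List (Fin m))
    (ρ : Matrix (Fin d) (Fin d) ℂ) : ℝ :=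
  ∑ n ∈ Finset.range (f.length + 1),
    (M0 * Tword E M1 (f.take n) ρ * M0ᴴ).trace.re

/-- Termination probability along a schedule `s`. -/
def tSched (E : Fin m → Fin r → Matrix (Fin d) (Fin d) ℂ)
    (M0 M1 : Matrix (Fin d) (Fin d) ℂ) (s : ℕ → Fin m)
    (ρ : Matrix (Fin d) (Fin d) ℂ) : ℝ :=
  ∑' n : ℕ, (M0 * Tword E M1 (prefixn s n) ρ * M0ᴴ).trace.re

/-- Termination probability `t(ρ)`: infimum over all schedules. -/
def tInf (E : Fin m → Fin r → Matrix (Fin d) (Fin d) ℂ)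
    (M0 M1 : Matrix (Fin d) (Fin d) ℂ)
    (ρ : Matrix (Fin d) (Fin d) ℂ) : ℝ :=
  ⨅ s : ℕ → Fin m, tSched E M0 M1 s ρ

/-- The reachable space `H_{R(ρ)}`. -/
def HR (E : Fin m → Fin r → Matrix (Fin d) (Fin d) ℂ)
    (M1 : Matrix (Fin d) (Fin d) ℂ)
    (ρ : Matrix (Fin d) (Fin d) ℂ) : Submodule ℂ (Fin d → ℂ) :=
  ⨆ f : List (Fin m), supp (Tword E M1 f ρ)

/-- The average super-operator `T = (1/m) ∑ T_i`. -/
def Tavg (E : Fin m → Fin r → Matrix (Fin d) (Fin d) ℂ)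
    (M1 : Matrix (Fin d) (Fin d) ℂ)
    (ρ : Matrix (Fin d) (Fin d) ℂ) : Matrix (Fin d) (Fin d) ℂ :=
  ((m : ℂ)⁻¹) • ∑ i : Fin m, Tstep E M1 i ρ

/-- `H_{R̄_n(ρ)} = ⋁_{k=0}^n supp(T^k(ρ))`. -/
def HRbar (E : Fin m → Fin r → Matrix (Fin d) (Fin d) ℂ)
    (M1 : Matrix (Fin d) (Fin d) ℂ)
    (ρ : Matrix (Fin d) (Fin d) ℂ) (n : ℕ) : Submodule ℂ (Fin d → ℂ) :=
  ⨆ k : Fin (n + 1), supp ((Tavg E M1)^[k] ρ)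

/-- Reachable termination probability `h(ρ)`. -/
def hProb (E : Fin m → Fin r → Matrix (Fin d) (Fin d) ℂ)
    (M0 M1 : Matrix (Fin d) (Fin d) ℂ)
    (ρ : Matrix (Fin d) (Fin d) ℂ) : ℝ :=
  sInf { x : ℝ | ∃ σ : Matrix (Fin d) (Fin d) ℂ,
    σ.PosSemidef ∧ σ.trace = 1 ∧ supp σ ≤ HR E M1 ρ ∧ x = tInf E M0 M1 σ }

/-- `PD_f`: pure states diverging within the word `f`. -/
def PDword (E : Fin m → Fin r → Matrix (Fin d) (Fin d) ℂ)
    (M0 M1 : Matrix (Fin d) (Fin d) ℂ) (f : List (Fin m)) : Set (Fin d → ℂ) :=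
  { x : Fin d → ℂ | tWord E M0 M1 f (Matrix.vecMulVec x (star x)) = 0 }

/-- `PD_n`: union of `PD_f` over words of length `n`. -/
def PDn (E : Fin m → Fin r → Matrix (Fin d) (Fin d) ℂ)
    (M0 M1 : Matrix (Fin d) (Fin d) ℂ) (n : ℕ) : Set (Fin d → ℂ) :=
  { x : Fin d → ℂ | ∃ f : List (Fin m), f.length = n ∧ x ∈ PDword E M0 M1 f }

/-- `PD`: the diverging pure states. -/
def PD (E : Fin m → Fin r → Matrix (Fin d) (Fin d) ℂ)
    (M0 M1 : Matrix (Fin d) (Fin d) ℂ) : Set (Fin d → ℂ) :=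
  { x : Fin d → ℂ | ∃ s : ℕ → Fin m, tSched E M0 M1 s (Matrix.vecMulVec x (star x)) = 0 }

section Aux
variable (E : Fin m → Fin r → Matrix (Fin d) (Fin d) ℂ)
  (M0 M1 : Matrix (Fin d) (Fin d) ℂ)

lemma Tstep_add (i : Fin m) (ρ σ : Matrix (Fin d) (Fin d) ℂ) :
    Tstep E M1 i (ρ + σ) = Tstep E M1 i ρ + Tstep E M1 i σ := by
  simp [Tstep, Matrix.mul_add, Matrix.add_mul, Finset.sum_add_distrib]

lemma Tstep_smul (i : Fin m) (c : ℂ) (ρ : Matrix (Fin d) (Fin d) ℂ) :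
    Tstep E M1 i (c • ρ) = c • Tstep E M1 i ρ := by
  simp [Tstep, Matrix.mul_smul, Matrix.smul_mul, Finset.smul_sum]

lemma Tword_cons (k : Fin m) (l : List (Fin m)) (ρ : Matrix (Fin d) (Fin d) ℂ) :
    Tword E M1 (k :: l) ρ = Tword E M1 l (Tstep E M1 k ρ) := rfl

lemma Tword_concat (f : List (Fin m)) (k : Fin m) (ρ : Matrix (Fin d) (Fin d) ℂ) :
    Tword E M1 (f ++ [k]) ρ = Tstep E M1 k (Tword E M1 f ρ) := by
  simp [Tword, List.foldl_append]

lemma Tword_add (f : List (Fin m)) : ∀ ρ σ : Matrix (Fin d) (Fin d) ℂ,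
    Tword E M1 f (ρ + σ) = Tword E M1 f ρ + Tword E M1 f σ := by
  induction f with
  | nil => intro ρ σ; rfl
  | cons k l ih =>
      intro ρ σ
      rw [Tword_cons, Tstep_add, ih, Tword_cons, Tword_cons]

lemma Tword_smul (f : List (Fin m)) : ∀ (c : ℂ) (ρ : Matrix (Fin d) (Fin d) ℂ),
    Tword E M1 f (c • ρ) = c • Tword E M1 f ρ := by
  induction f with
  | nil => intro c ρ; rfl
  | cons k l ih =>
      intro c ρ
      rw [Tword_cons, Tstep_smul, ih, Tword_cons]

lemma Tstep_posSemidef (i : Fin m) {ρ : Matrix (Fin d) (Fin d) ℂ} (hρ : ρ.PosSemidef) :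
    (Tstep E M1 i ρ).PosSemidef := by
  unfold Tstep
  refine Finset.sum_induction _ _ (fun a b ha hb => ha.add hb) Matrix.PosSemidef.zero ?_
  intro j _
  exact hρ.mul_mul_conjTranspose_same _

lemma Tword_posSemidef (f : List (Fin m)) : ∀ {ρ : Matrix (Fin d) (Fin d) ℂ},
    ρ.PosSemidef → (Tword E M1 f ρ).PosSemidef := by
  induction f with
  | nil => intro ρ h; exact h
  | cons k l ih =>
      intro ρ h
      rw [Tword_cons]
      exact ih (Tstep_posSemidef E M1 k h)

lemma trace_mul_rot (B ρ : Matrix (Fin d) (Fin d) ℂ) :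
    (B * ρ * Bᴴ).trace = ((Bᴴ * B) * ρ).trace := by
  rw [Matrix.trace_mul_comm, ← Matrix.mul_assoc]

lemma trace_Tstep (hE : ∀ i, ∑ j, (E i j)ᴴ * E i j = 1) (i : Fin m)
    (ρ : Matrix (Fin d) (Fin d) ℂ) :
    (Tstep E M1 i ρ).trace = (M1 * ρ * M1ᴴ).trace := by
  unfold Tstep
  rw [Matrix.trace_sum]
  calc ∑ j, ((E i j * M1) * ρ * (E i j * M1)ᴴ).trace
      = ∑ j, ((M1ᴴ * ((E i j)ᴴ * E i j) * M1) * ρ).trace := by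
        refine Finset.sum_congr rfl fun j _ => ?_
        rw [trace_mul_rot]
        congr 2
        simp [Matrix.conjTranspose_mul, Matrix.mul_assoc]
    _ = ((M1ᴴ * (∑ j, (E i j)ᴴ * E i j) * M1) * ρ).trace := by
        rw [← Matrix.trace_sum]
        congr 1
        simp [Finset.mul_sum, Finset.sum_mul]
    _ = (M1 * ρ * M1ᴴ).trace := by
        rw [hE i, Matrix.mul_one, ← trace_mul_rot M1 ρ]

lemma trace_step (hE : ∀ i, ∑ j, (E i j)ᴴ * E i j = 1)
    (hM : M0ᴴ * M0 + M1ᴴ * M1 = 1) (i : Fin m) (ρ : Matrix (Fin d) (Fin d) ℂ) :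
    ρ.trace = (M0 * ρ * M0ᴴ).trace + (Tstep E M1 i ρ).trace := by
  rw [trace_Tstep E M1 hE i ρ, trace_mul_rot, trace_mul_rot, ← Matrix.trace_add,
    ← Matrix.add_mul, hM, Matrix.one_mul]

lemma trace_re_nonneg {A : Matrix (Fin d) (Fin d) ℂ} (hA : A.PosSemidef) :
    0 ≤ A.trace.re := by
  have h : ∀ i, 0 ≤ (A i i).re := by
    intro i
    have := hA.re_dotProduct_nonneg (Pi.single i 1)
    simpa [Matrix.mulVec_single, dotProduct, Pi.single_apply, apply_ite,
      Finset.sum_ite_eq] using this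
  rw [Matrix.trace, Complex.re_sum]
  exact Finset.sum_nonneg fun i _ => h i

lemma prefixn_succ (s : ℕ → Fin m) (N : ℕ) :
    prefixn s (N + 1) = prefixn s N ++ [s N] := by
  rw [prefixn, List.ofFn_succ']
  simp [prefixn, List.concat_eq_append]

lemma vecMulVec_posSemidef (x : Fin d → ℂ) :
    (Matrix.vecMulVec x (star x)).PosSemidef := by
  rw [Matrix.vecMulVec_eq (Fin 1), ← Matrix.conjTranspose_replicateCol]
  exact Matrix.posSemidef_self_mul_conjTranspose _

end Aux

section Main
variable {E : Fin m → Fin r → Matrix (Fin d) (Fin d) ℂ}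
  {M0 M1 : Matrix (Fin d) (Fin d) ℂ}

lemma Tword_zero (f : List (Fin m)) : Tword E M1 f (0 : Matrix (Fin d) (Fin d) ℂ) = 0 := by
  have := Tword_smul E M1 f 0 0
  simpa using this

lemma sum_range_g (hE : ∀ i, ∑ j, (E i j)ᴴ * E i j = 1)
    (hM : M0ᴴ * M0 + M1ᴴ * M1 = 1) (ρ : Matrix (Fin d) (Fin d) ℂ)
    (s : ℕ → Fin m) (N : ℕ) :
    ∑ n ∈ Finset.range N, (M0 * Tword E M1 (prefixn s n) ρ * M0ᴴ).trace.re
      = ρ.trace.re - (Tword E M1 (prefixn s N) ρ).trace.re := by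
  induction N with
  | zero => simp [prefixn, Tword]
  | succ N ih =>
      rw [Finset.sum_range_succ, ih, prefixn_succ, Tword_concat]
      have h := congrArg Complex.re
        (trace_step E M0 M1 hE hM (s N) (Tword E M1 (prefixn s N) ρ))
      rw [Complex.add_re] at h
      linarith

lemma g_nonneg {ρ : Matrix (Fin d) (Fin d) ℂ} (hρ : ρ.PosSemidef) (f : List (Fin m)) :
    0 ≤ (M0 * Tword E M1 f ρ * M0ᴴ).trace.re :=
  trace_re_nonneg ((Tword_posSemidef E M1 f hρ).mul_mul_conjTranspose_same M0)

lemma summable_g (hE : ∀ i, ∑ j, (E i j)ᴴ * E i j = 1)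
    (hM : M0ᴴ * M0 + M1ᴴ * M1 = 1) {ρ : Matrix (Fin d) (Fin d) ℂ}
    (hρ : ρ.PosSemidef) (s : ℕ → Fin m) :
    Summable (fun n => (M0 * Tword E M1 (prefixn s n) ρ * M0ᴴ).trace.re) := by
  refine summable_of_sum_range_le (c := ρ.trace.re) (fun n => g_nonneg hρ _) (fun N => ?_)
  rw [sum_range_g hE hM ρ s N]
  have := trace_re_nonneg (Tword_posSemidef E M1 (prefixn s N) hρ)
  linarith

lemma tSched_le (hE : ∀ i, ∑ j, (E i j)ᴴ * E i j = 1)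
    (hM : M0ᴴ * M0 + M1ᴴ * M1 = 1) {ρ : Matrix (Fin d) (Fin d) ℂ}
    (hρ : ρ.PosSemidef) (s : ℕ → Fin m) :
    tSched E M0 M1 s ρ ≤ ρ.trace.re := by
  refine Real.tsum_le_of_sum_range_le (fun n => g_nonneg hρ _) (fun N => ?_)
  rw [sum_range_g hE hM ρ s N]
  have := trace_re_nonneg (Tword_posSemidef E M1 (prefixn s N) hρ)
  linarith

lemma trace_re_Tword_add (f : List (Fin m)) (ρ σ : Matrix (Fin d) (Fin d) ℂ) :
    (Tword E M1 f (ρ + σ)).trace.re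
      = (Tword E M1 f ρ).trace.re + (Tword E M1 f σ).trace.re := by
  rw [Tword_add, Matrix.trace_add, Complex.add_re]

lemma trace_re_Tword_rsmul (f : List (Fin m)) (k : ℝ) (ρ : Matrix (Fin d) (Fin d) ℂ) :
    (Tword E M1 f (((k : ℝ) : ℂ) • ρ)).trace.re = k * (Tword E M1 f ρ).trace.re := by
  rw [Tword_smul, Matrix.trace_smul, smul_eq_mul, Complex.re_ofReal_mul]

end Main

/-- the set of terminating vectors is a linear subspace of `ℂ^d`. -/
theorem terminating_vectors_subspace (d m r : ℕ) (hd : 0 < d) (hm : 0 < m)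
    (E : Fin m → Fin r → Matrix (Fin d) (Fin d) ℂ)
    (hE : ∀ i, ∑ j, (E i j)ᴴ * E i j = 1)
    (M0 M1 : Matrix (Fin d) (Fin d) ℂ)
    (hM : M0ᴴ * M0 + M1ᴴ * M1 = 1) :
    (0 : Fin d → ℂ) ∈
        { x : Fin d → ℂ | tInf E M0 M1 (Matrix.vecMulVec x (star x)) =
            (Matrix.vecMulVec x (star x)).trace.re } ∧
    (∀ x ∈ { x : Fin d → ℂ | tInf E M0 M1 (Matrix.vecMulVec x (star x)) =
            (Matrix.vecMulVec x (star x)).trace.re },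
      ∀ y ∈ { x : Fin d → ℂ | tInf E M0 M1 (Matrix.vecMulVec x (star x)) =
            (Matrix.vecMulVec x (star x)).trace.re },
        x + y ∈ { x : Fin d → ℂ | tInf E M0 M1 (Matrix.vecMulVec x (star x)) =
            (Matrix.vecMulVec x (star x)).trace.re }) ∧
    (∀ (c : ℂ), ∀ x ∈ { x : Fin d → ℂ | tInf E M0 M1 (Matrix.vecMulVec x (star x)) =
            (Matrix.vecMulVec x (star x)).trace.re },
      c • x ∈ { x : Fin d → ℂ | tInf E M0 M1 (Matrix.vecMulVec x (star x)) =
            (Matrix.vecMulVec x (star x)).trace.re }) := by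
  haveI : Nonempty (Fin m) := ⟨⟨0, hm⟩⟩
  have hconst : ∀ ρ : Matrix (Fin d) (Fin d) ℂ,
      (∀ s, tSched E M0 M1 s ρ = ρ.trace.re) → tInf E M0 M1 ρ = ρ.trace.re := by
    intro ρ h
    rw [tInf]
    simp only [h]
    exact ciInf_const
  have hbdd : ∀ ρ : Matrix (Fin d) (Fin d) ℂ, ρ.PosSemidef →
      BddBelow (Set.range fun s : ℕ → Fin m => tSched E M0 M1 s ρ) := by
    intro ρ hρ
    refine ⟨0, ?_⟩
    rintro z ⟨s, rfl⟩
    exact tsum_nonneg fun n => g_nonneg hρ _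
  have hall : ∀ ρ : Matrix (Fin d) (Fin d) ℂ, ρ.PosSemidef →
      tInf E M0 M1 ρ = ρ.trace.re → ∀ s, tSched E M0 M1 s ρ = ρ.trace.re := by
    intro ρ hρ h s
    refine le_antisymm (tSched_le hE hM hρ s) ?_
    calc ρ.trace.re = tInf E M0 M1 ρ := h.symm
      _ ≤ tSched E M0 M1 s ρ := ciInf_le (hbdd ρ hρ) s
  refine ⟨?_, ?_, ?_⟩
  · -- zero
    simp only [Set.mem_setOf_eq]
    have h0 : Matrix.vecMulVec (0 : Fin d → ℂ) (star (0 : Fin d → ℂ)) = 0 := by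
      ext i j; simp [Matrix.vecMulVec_apply]
    rw [h0]
    apply hconst
    intro s
    simp [tSched, Tword_zero]
  · -- addition
    intro x hx y hy
    simp only [Set.mem_setOf_eq] at hx hy ⊢
    set ρx := Matrix.vecMulVec x (star x) with hρxdef
    set ρy := Matrix.vecMulVec y (star y) with hρydef
    set τ := Matrix.vecMulVec (x + y) (star (x + y)) with hτdef
    set δ := Matrix.vecMulVec (x - y) (star (x - y)) with hδdef
    have hρx : ρx.PosSemidef := vecMulVec_posSemidef x
    have hρy : ρy.PosSemidef := vecMulVec_posSemidef y
    have hτ : τ.PosSemidef := vecMulVec_posSemidef (x + y)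
    have hδ : δ.PosSemidef := vecMulVec_posSemidef (x - y)
    have hpar : τ + δ = ((2 : ℝ) : ℂ) • ρx + ((2 : ℝ) : ℂ) • ρy := by
      ext i j
      simp only [hτdef, hδdef, hρxdef, hρydef, Matrix.add_apply, Matrix.smul_apply,
        Matrix.vecMulVec_apply, Pi.add_apply, Pi.sub_apply, Pi.star_apply, star_add,
        star_sub, smul_eq_mul]
      push_cast
      ring
    have hsx := hall ρx hρx hx
    have hsy := hall ρy hρy hy
    apply hconst
    intro s
    refine le_antisymm (tSched_le hE hM hτ s) ?_
    -- a σ N and g σ n notation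
    have ha_bound : ∀ N : ℕ, (Tword E M1 (prefixn s N) τ).trace.re
        ≤ 2 * (Tword E M1 (prefixn s N) ρx).trace.re
          + 2 * (Tword E M1 (prefixn s N) ρy).trace.re := by
      intro N
      have h1 : (Tword E M1 (prefixn s N) (τ + δ)).trace.re
          = (Tword E M1 (prefixn s N) τ).trace.re
            + (Tword E M1 (prefixn s N) δ).trace.re :=
        trace_re_Tword_add _ _ _
      have h2 : (Tword E M1 (prefixn s N) (((2:ℝ):ℂ) • ρx + ((2:ℝ):ℂ) • ρy)).trace.re
          = 2 * (Tword E M1 (prefixn s N) ρx).trace.re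
            + 2 * (Tword E M1 (prefixn s N) ρy).trace.re := by
        rw [trace_re_Tword_add, trace_re_Tword_rsmul, trace_re_Tword_rsmul]
      rw [hpar, h2] at h1
      have h3 : 0 ≤ (Tword E M1 (prefixn s N) δ).trace.re :=
        trace_re_nonneg (Tword_posSemidef E M1 (prefixn s N) hδ)
      linarith
    have hbx : Filter.Tendsto
        (fun N => ∑ n ∈ Finset.range N, (M0 * Tword E M1 (prefixn s n) ρx * M0ᴴ).trace.re)
        Filter.atTop (nhds (ρx.trace.re)) := by
      have h := (summable_g hE hM hρx s).hasSum.tendsto_sum_nat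
      have htsum : (∑' n, (M0 * Tword E M1 (prefixn s n) ρx * M0ᴴ).trace.re)
          = ρx.trace.re := hsx s
      rwa [htsum] at h
    have hby : Filter.Tendsto
        (fun N => ∑ n ∈ Finset.range N, (M0 * Tword E M1 (prefixn s n) ρy * M0ᴴ).trace.re)
        Filter.atTop (nhds (ρy.trace.re)) := by
      have h := (summable_g hE hM hρy s).hasSum.tendsto_sum_nat
      have htsum : (∑' n, (M0 * Tword E M1 (prefixn s n) ρy * M0ᴴ).trace.re)
          = ρy.trace.re := hsy s
      rwa [htsum] at h
    have hax : Filter.Tendsto (fun N => (Tword E M1 (prefixn s N) ρx).trace.re)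
        Filter.atTop (nhds 0) := by
      have heq : ∀ N, (Tword E M1 (prefixn s N) ρx).trace.re
          = ρx.trace.re - ∑ n ∈ Finset.range N, (M0 * Tword E M1 (prefixn s n) ρx * M0ᴴ).trace.re := by
        intro N
        have := sum_range_g hE hM ρx s N
        linarith
      simp only [heq]
      simpa using hbx.const_sub (ρx.trace.re)
    have hay : Filter.Tendsto (fun N => (Tword E M1 (prefixn s N) ρy).trace.re)
        Filter.atTop (nhds 0) := by
      have heq : ∀ N, (Tword E M1 (prefixn s N) ρy).trace.re
          = ρy.trace.re - ∑ n ∈ Finset.range N, (M0 * Tword E M1 (prefixn s n) ρy * M0ᴴ).trace.re := by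
        intro N
        have := sum_range_g hE hM ρy s N
        linarith
      simp only [heq]
      simpa using hby.const_sub (ρy.trace.re)
    have hlim : Filter.Tendsto
        (fun N => τ.trace.re - (2 * (Tword E M1 (prefixn s N) ρx).trace.re
          + 2 * (Tword E M1 (prefixn s N) ρy).trace.re)) Filter.atTop (nhds (τ.trace.re)) := by
      have h := ((hax.const_mul 2).add (hay.const_mul 2)).const_sub (τ.trace.re)
      simpa using h
    refine le_of_tendsto hlim (Filter.Eventually.of_forall fun N => ?_)
    have hpartial : ∑ n ∈ Finset.range N, (M0 * Tword E M1 (prefixn s n) τ * M0ᴴ).trace.re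
        ≤ tSched E M0 M1 s τ :=
      Summable.sum_le_tsum (Finset.range N) (fun n _ => g_nonneg hτ _) (summable_g hE hM hτ s)
    have hsr := sum_range_g hE hM τ s N
    have hb := ha_bound N
    linarith
  · -- scalar multiplication
    intro c x hx
    simp only [Set.mem_setOf_eq] at hx ⊢
    set ρ := Matrix.vecMulVec x (star x) with hρdef
    have hρ : ρ.PosSemidef := vecMulVec_posSemidef x
    have hsx := hall ρ hρ hx
    have hsc : Matrix.vecMulVec (c • x) (star (c • x))
        = ((Complex.normSq c : ℝ) : ℂ) • ρ := by
      ext i j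
      simp only [hρdef, Matrix.smul_apply, Matrix.vecMulVec_apply, Pi.smul_apply,
        Pi.star_apply, smul_eq_mul, star_mul']
      rw [← Complex.mul_conj, show (starRingEnd ℂ) c = star c from rfl]
      ring
    rw [hsc]
    set k := (Complex.normSq c : ℝ) with hk
    have hkA : ∀ A : Matrix (Fin d) (Fin d) ℂ, (((k : ℝ) : ℂ) • A).trace.re = k * A.trace.re := by
      intro A
      rw [Matrix.trace_smul, smul_eq_mul, Complex.re_ofReal_mul]
    apply hconst
    intro s
    have hterm : ∀ n, (M0 * Tword E M1 (prefixn s n) (((k:ℝ):ℂ) • ρ) * M0ᴴ).trace.re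
        = k * (M0 * Tword E M1 (prefixn s n) ρ * M0ᴴ).trace.re := by
      intro n
      rw [Tword_smul, Matrix.mul_smul, Matrix.smul_mul, hkA]
    have hts : tSched E M0 M1 s (((k:ℝ):ℂ) • ρ) = k * tSched E M0 M1 s ρ := by
      unfold tSched
      simp only [hterm]
      exact tsum_mul_left
    rw [hts, hsx s, hkA ρ]
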